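/- The fictitious arrival time t̃₀ : [0,∞) → [t₀,∞), where t₀ = t̃₀(0), is a bijection (in particular continuous, strictly increasing, and tending to +∞ as q → ∞). -/

import Mathlib

open Set Filter

theorem fat_aux (a b f g : ℝ → ℝ) (ca cb Kf Kg : ℝ)
    (hca : 0 < ca) (hcb : 0 < cb) (hKf : 0 < Kf) (hKg : 0 < Kg)
    (ha : ∀ ξ, ca ≤ a ξ) (hb : ∀ ξ, cb ≤ b ξ)
    (hfl : ∀ q, 1 / Kf ≤ f q) (hgl : ∀ q, 1 / Kg ≤ g q)
    (hfc : Continuous f) (hgc : Continuous g)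
    (hfm : StrictMonoOn f (Set.Ici 0)) (hgm : StrictMonoOn g (Set.Ici 0))
    (hfq : ∀ q, 0 ≤ q → q ≤ f q) :
    ContinuousOn (fun q => sInf (Set.range fun ξ => a ξ * f q + b ξ * g q)) (Set.Ici 0) ∧
    StrictMonoOn (fun q => sInf (Set.range fun ξ => a ξ * f q + b ξ * g q)) (Set.Ici 0) ∧
    Filter.Tendsto (fun q => sInf (Set.range fun ξ => a ξ * f q + b ξ * g q))
      Filter.atTop Filter.atTop ∧
    Set.BijOn (fun q => sInf (Set.range fun ξ => a ξ * f q + b ξ * g q)) (Set.Ici 0)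
      (Set.Ici (sInf (Set.range fun ξ => a ξ * f 0 + b ξ * g 0))) := by
  set T : ℝ → ℝ := fun q => sInf (Set.range fun ξ => a ξ * f q + b ξ * g q) with hT
  have hfpos : ∀ q, 0 < f q := fun q => lt_of_lt_of_le (by positivity) (hfl q)
  have hgpos : ∀ q, 0 < g q := fun q => lt_of_lt_of_le (by positivity) (hgl q)
  have hapos : ∀ ξ, 0 < a ξ := fun ξ => lt_of_lt_of_le hca (ha ξ)
  have hbpos : ∀ ξ, 0 < b ξ := fun ξ => lt_of_lt_of_le hcb (hb ξ)
  have hne : ∀ q, (Set.range fun ξ => a ξ * f q + b ξ * g q).Nonempty :=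
    fun q => ⟨a 0 * f q + b 0 * g q, ⟨0, rfl⟩⟩
  have hbdd : ∀ q, BddBelow (Set.range fun ξ => a ξ * f q + b ξ * g q) := by
    intro q
    refine ⟨0, ?_⟩
    rintro v ⟨ξ, rfl⟩
    dsimp only
    have := (hapos ξ).le; have := (hbpos ξ).le
    have := (hfpos q).le; have := (hgpos q).le
    positivity
  have hle : ∀ q ξ, T q ≤ a ξ * f q + b ξ * g q := fun q ξ => csInf_le (hbdd q) ⟨ξ, rfl⟩
  have hlb : ∀ q, ca * f q + cb * g q ≤ T q := by
    intro q
    apply le_csInf (hne q)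
    rintro v ⟨ξ, rfl⟩
    dsimp only
    have h1 : ca * f q ≤ a ξ * f q := mul_le_mul_of_nonneg_right (ha ξ) (hfpos q).le
    have h2 : cb * g q ≤ b ξ * g q := mul_le_mul_of_nonneg_right (hb ξ) (hgpos q).le
    linarith
  have hTpos : ∀ q, 0 < T q := by
    intro q
    have : 0 < ca * f q + cb * g q := by
      have := hfpos q; have := hgpos q; positivity
    linarith [hlb q]
  -- key inequality
  have key : ∀ p q, T q ≤ T p * (1 + (Kf * |f q - f p| + Kg * |g q - g p|)) := by
    intro p q
    set E : ℝ := Kf * |f q - f p| + Kg * |g q - g p| with hE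
    have hE0 : 0 ≤ E := by positivity
    have h1E : (0:ℝ) < 1 + E := by linarith
    rw [← div_le_iff₀ h1E]
    apply le_csInf (hne p)
    rintro v ⟨ξ, rfl⟩
    dsimp only
    rw [div_le_iff₀ h1E]
    set S : ℝ := a ξ * f p + b ξ * g p with hS
    have haS : a ξ ≤ S * Kf := by
      have h1 : a ξ * (1 / Kf) ≤ a ξ * f p := mul_le_mul_of_nonneg_left (hfl p) (hapos ξ).le
      have h2 : a ξ * f p ≤ S := by
        have := mul_nonneg (hbpos ξ).le (hgpos p).le; rw [hS]; linarith
      have h3 : a ξ * (1 / Kf) * Kf = a ξ := by field_simp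
      nlinarith [mul_le_mul_of_nonneg_right (h1.trans h2) hKf.le]
    have hbS : b ξ ≤ S * Kg := by
      have h1 : b ξ * (1 / Kg) ≤ b ξ * g p := mul_le_mul_of_nonneg_left (hgl p) (hbpos ξ).le
      have h2 : b ξ * g p ≤ S := by
        have := mul_nonneg (hapos ξ).le (hfpos p).le; rw [hS]; linarith
      have h3 : b ξ * (1 / Kg) * Kg = b ξ := by field_simp
      nlinarith [mul_le_mul_of_nonneg_right (h1.trans h2) hKg.le]
    have hdf : f q ≤ f p + |f q - f p| := by
      have := le_abs_self (f q - f p); linarith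
    have hdg : g q ≤ g p + |g q - g p| := by
      have := le_abs_self (g q - g p); linarith
    have h4 : a ξ * f q ≤ a ξ * f p + a ξ * |f q - f p| := by nlinarith [(hapos ξ).le]
    have h5 : b ξ * g q ≤ b ξ * g p + b ξ * |g q - g p| := by nlinarith [(hbpos ξ).le]
    have h6 : a ξ * |f q - f p| ≤ S * Kf * |f q - f p| :=
      mul_le_mul_of_nonneg_right haS (abs_nonneg _)
    have h7 : b ξ * |g q - g p| ≤ S * Kg * |g q - g p| :=
      mul_le_mul_of_nonneg_right hbS (abs_nonneg _)
    have h8 := hle q ξ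
    have : S * (1 + E) = S + S * Kf * |f q - f p| + S * Kg * |g q - g p| := by
      rw [hE]; ring
    rw [this]
    linarith
  have hsm : StrictMonoOn T (Set.Ici 0) := by
    intro p hp q hq hpq
    have hfpq : f p < f q := hfm hp hq hpq
    have hgpq : g p < g q := hgm hp hq hpq
    have hδ : 0 < ca * (f q - f p) + cb * (g q - g p) := by nlinarith
    have : T p + (ca * (f q - f p) + cb * (g q - g p)) ≤ T q := by
      apply le_csInf (hne q)
      rintro v ⟨ξ, rfl⟩
      dsimp only
      have h1 := hle p ξ
      have h2 : ca * (f q - f p) ≤ a ξ * (f q - f p) :=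
        mul_le_mul_of_nonneg_right (ha ξ) (by linarith)
      have h3 : cb * (g q - g p) ≤ b ξ * (g q - g p) :=
        mul_le_mul_of_nonneg_right (hb ξ) (by linarith)
      nlinarith
    linarith
  have htend : Tendsto T atTop atTop := by
    apply tendsto_atTop_mono' atTop (f₁ := fun q => ca * q + cb * (1 / Kg))
    · filter_upwards [eventually_ge_atTop (0:ℝ)] with q hq
      have h1 : ca * q ≤ ca * f q := mul_le_mul_of_nonneg_left (hfq q hq) hca.le
      have h2 : cb * (1 / Kg) ≤ cb * g q := mul_le_mul_of_nonneg_left (hgl q) hcb.le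
      have := hlb q
      linarith
    · exact tendsto_atTop_add_const_right _ _ (Tendsto.const_mul_atTop hca tendsto_id)
  have hcont : ContinuousOn T (Set.Ici 0) := by
    intro p hp
    have hEc : Continuous fun q => 1 + (Kf * |f q - f p| + Kg * |g q - g p|) := by
      fun_prop
    have hEp : (fun q => 1 + (Kf * |f q - f p| + Kg * |g q - g p|)) p = 1 := by
      simp
    have hEpos : ∀ q, (0:ℝ) < 1 + (Kf * |f q - f p| + Kg * |g q - g p|) := by
      intro q; positivity
    have hup : ∀ q, T q ≤ T p * (1 + (Kf * |f q - f p| + Kg * |g q - g p|)) := fun q => key p q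
    have hlo : ∀ q, T p / (1 + (Kf * |f q - f p| + Kg * |g q - g p|)) ≤ T q := by
      intro q
      rw [div_le_iff₀ (hEpos q)]
      have := key q p
      rw [abs_sub_comm (f p) (f q), abs_sub_comm (g p) (g q)] at this
      linarith
    have hU : Tendsto (fun q => T p * (1 + (Kf * |f q - f p| + Kg * |g q - g p|)))
        (nhdsWithin p (Set.Ici 0)) (nhds (T p)) := by
      have h := (((continuous_const (y := T p)).mul hEc).tendsto p).mono_left
        (nhdsWithin_le_nhds (s := Set.Ici (0:ℝ)))
      simpa [Pi.mul_def] using h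
    have hL : Tendsto (fun q => T p / (1 + (Kf * |f q - f p| + Kg * |g q - g p|)))
        (nhdsWithin p (Set.Ici 0)) (nhds (T p)) := by
      have hc : Continuous fun q => T p / (1 + (Kf * |f q - f p| + Kg * |g q - g p|)) :=
        (continuous_const (y := T p)).div hEc (fun q => (hEpos q).ne')
      have h := (hc.tendsto p).mono_left (nhdsWithin_le_nhds (s := Set.Ici (0:ℝ)))
      simpa using h
    exact tendsto_of_tendsto_of_tendsto_of_le_of_le hL hU (fun q => hlo q) (fun q => hup q)
  refine ⟨hcont, hsm, htend, ?_⟩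
  refine ⟨?_, hsm.injOn, ?_⟩
  · intro q hq
    exact hsm.monotoneOn (Set.self_mem_Ici) hq hq
  · intro t ht
    obtain ⟨q, hq1, hq2⟩ := ((htend.eventually_ge_atTop t).and (eventually_ge_atTop (0:ℝ))).exists
    have hsub : Set.Icc (0:ℝ) q ⊆ Set.Ici 0 := Set.Icc_subset_Ici_self
    have hIVT := intermediate_value_Icc hq2 (hcont.mono hsub)
    have htmem : t ∈ Set.Icc (T 0) (T q) := ⟨ht, hq1⟩
    exact (Set.image_mono hsub) (hIVT htmem)

/-- The fictitious arrival time `t̃₀` is a bijection from `[0,∞)` onto `[t₀,∞)` where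
`t₀ = t̃₀(0)`; in particular it is continuous on `[0,∞)`, strictly increasing there, and tends
to `+∞` as `q → ∞`. -/
theorem fictitious_arrival_time_bijective (Vp Vm h z x : ℝ)
    (hVp : 0 < Vp) (hVm : 0 < Vm) (hh : 0 < h) (hz : z < 0) (hx : 0 < x) :
    let t₀ : ℝ → ℝ := fun q =>
      sInf (Set.range fun ξ : ℝ =>
        Real.sqrt (ξ ^ 2 + h ^ 2) / (Vp * Real.sqrt (1 / (1 + Vp ^ 2 * q ^ 2)))
          + Real.sqrt ((x - ξ) ^ 2 + z ^ 2) / (Vm * Real.sqrt (1 / (1 + Vm ^ 2 * q ^ 2))))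
    ContinuousOn t₀ (Set.Ici 0) ∧ StrictMonoOn t₀ (Set.Ici 0) ∧
      Filter.Tendsto t₀ Filter.atTop Filter.atTop ∧
      Set.BijOn t₀ (Set.Ici 0) (Set.Ici (t₀ 0)) := by
  intro t₀
  have hrw : t₀ = fun q => sInf (Set.range fun ξ : ℝ =>
      Real.sqrt (ξ ^ 2 + h ^ 2) * (Real.sqrt (1 + Vp ^ 2 * q ^ 2) / Vp)
        + Real.sqrt ((x - ξ) ^ 2 + z ^ 2) * (Real.sqrt (1 + Vm ^ 2 * q ^ 2) / Vm)) := by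
    funext q
    show sInf _ = sInf _
    congr 2
    funext ξ
    have e : ∀ V : ℝ, 0 < V →
        Real.sqrt (1 / (1 + V ^ 2 * q ^ 2)) = 1 / Real.sqrt (1 + V ^ 2 * q ^ 2) := by
      intro V hV
      rw [one_div, Real.sqrt_inv, one_div]
    have s1 : (0:ℝ) < Real.sqrt (1 + Vp ^ 2 * q ^ 2) := Real.sqrt_pos.2 (by positivity)
    have s2 : (0:ℝ) < Real.sqrt (1 + Vm ^ 2 * q ^ 2) := Real.sqrt_pos.2 (by positivity)
    rw [e Vp hVp, e Vm hVm]
    field_simp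
  rw [hrw]
  have hsq : ∀ (V p q : ℝ), 0 < V → 0 ≤ p → p < q →
      Real.sqrt (1 + V ^ 2 * p ^ 2) / V < Real.sqrt (1 + V ^ 2 * q ^ 2) / V := by
    intro V p q hV hp hpq
    have hpq2 : p ^ 2 < q ^ 2 := by nlinarith [mul_pos (sub_pos.2 hpq) (show (0:ℝ) < q + p by linarith)]
    have hpq3 := mul_lt_mul_of_pos_left hpq2 (show (0:ℝ) < V ^ 2 by positivity)
    have hs : Real.sqrt (1 + V ^ 2 * p ^ 2) < Real.sqrt (1 + V ^ 2 * q ^ 2) :=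
      Real.sqrt_lt_sqrt (by positivity) (by linarith)
    exact div_lt_div_of_pos_right hs hV
  have hlow : ∀ (V q : ℝ), 0 < V → 1 / V ≤ Real.sqrt (1 + V ^ 2 * q ^ 2) / V := by
    intro V q hV
    have hs : (1:ℝ) ≤ Real.sqrt (1 + V ^ 2 * q ^ 2) :=
      Real.one_le_sqrt.2 (by nlinarith)
    exact div_le_div_of_nonneg_right hs hV.le
  exact fat_aux (fun ξ => Real.sqrt (ξ ^ 2 + h ^ 2))
    (fun ξ => Real.sqrt ((x - ξ) ^ 2 + z ^ 2))
    (fun q => Real.sqrt (1 + Vp ^ 2 * q ^ 2) / Vp)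
    (fun q => Real.sqrt (1 + Vm ^ 2 * q ^ 2) / Vm)
    h (-z) Vp Vm hh (by linarith) hVp hVm
    (fun ξ => by
      calc h = Real.sqrt (h ^ 2) := (Real.sqrt_sq hh.le).symm
      _ ≤ _ := Real.sqrt_le_sqrt (by nlinarith))
    (fun ξ => by
      calc -z = |z| := (abs_of_neg hz).symm
      _ = Real.sqrt (z ^ 2) := (Real.sqrt_sq_eq_abs z).symm
      _ ≤ _ := Real.sqrt_le_sqrt (by nlinarith))
    (fun q => hlow Vp q hVp) (fun q => hlow Vm q hVm)
    (by fun_prop) (by fun_prop)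
    (fun p hp q hq hpq => hsq Vp p q hVp hp hpq)
    (fun p hp q hq hpq => hsq Vm p q hVm hp hpq)
    (fun q hq => by
      rw [le_div_iff₀ hVp]
      calc q * Vp = Real.sqrt ((q * Vp) ^ 2) := (Real.sqrt_sq (by positivity)).symm
      _ ≤ _ := Real.sqrt_le_sqrt (by nlinarith))
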